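/- Every sequence u : ℕ → 𝔻² in the bidisc which converges to a point of the boundary ∂𝔻² is admissible with respect to the base point (0,0) and the Kobayashi distance d₂ of the bidisc. -/

import Mathlib

open Filter Set

noncomputable section

/-- The inverse hyperbolic tangent: `artanh r = (1/2) log ((1+r)/(1-r))`. -/
def artanh (r : ℝ) : ℝ := (1 / 2) * Real.log ((1 + r) / (1 - r))

/-- The Poincaré (Kobayashi) distance on the unit disc
`ρ(z,w) = artanh |(z - w)/(1 - conj w * z)|`. -/
def pd (z w : ℂ) : ℝ := artanh ‖(z - w) / (1 - (starRingEnd ℂ) w * z)‖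

/-- The Kobayashi distance of the bidisc. -/
def kd2 (z w : ℂ × ℂ) : ℝ := max (pd z.1 w.1) (pd z.2 w.2)

/-- The open unit bidisc. -/
def bidisc : Set (ℂ × ℂ) := {z : ℂ × ℂ | ‖z.1‖ < 1 ∧ ‖z.2‖ < 1}

/-- The horosphere in the bidisc of a sequence `u` with respect to base point `x`
and radius `R`. -/
def biE (x : ℂ × ℂ) (u : ℕ → ℂ × ℂ) (R : ℝ) : Set (ℂ × ℂ) :=
  {z : ℂ × ℂ | z ∈ bidisc ∧
    Filter.limsup (fun n => kd2 z (u n) - kd2 x (u n)) Filter.atTop < (1 / 2) * Real.log R}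



lemma key_identity (z w : ℂ) :
    ‖1 - (starRingEnd ℂ) w * z‖ ^ 2 - ‖z - w‖ ^ 2
      = (1 - ‖z‖ ^ 2) * (1 - ‖w‖ ^ 2) := by
  rw [Complex.sq_norm, Complex.sq_norm, Complex.sq_norm, Complex.sq_norm]
  simp only [Complex.normSq_apply, Complex.mul_re, Complex.mul_im, Complex.sub_re,
    Complex.sub_im, Complex.conj_re, Complex.conj_im, Complex.one_re, Complex.one_im]
  ring

lemma N_lt_D {z w : ℂ} (hz : ‖z‖ < 1) (hw : ‖w‖ < 1) :
    ‖z - w‖ < ‖1 - (starRingEnd ℂ) w * z‖ := by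
  have h1 : ‖z‖ ^ 2 < 1 := by nlinarith [norm_nonneg z]
  have h2 : ‖w‖ ^ 2 < 1 := by nlinarith [norm_nonneg w]
  nlinarith [key_identity z w, norm_nonneg (z - w),
    norm_nonneg (1 - (starRingEnd ℂ) w * z)]

lemma pd_formula {z w : ℂ} (hz : ‖z‖ < 1) (hw : ‖w‖ < 1) :
    pd z w = (1 / 2) * Real.log
      ((‖1 - (starRingEnd ℂ) w * z‖ + ‖z - w‖) ^ 2
        / ((1 - ‖z‖ ^ 2) * (1 - ‖w‖ ^ 2))) := by
  set D := ‖1 - (starRingEnd ℂ) w * z‖ with hD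
  set N := ‖z - w‖ with hN
  have hND : N < D := N_lt_D hz hw
  have hN0 : 0 ≤ N := norm_nonneg _
  have hD0 : 0 < D := lt_of_le_of_lt hN0 hND
  have h1 : pd z w = artanh (N / D) := by
    rw [pd, norm_div]
  rw [h1, artanh]
  congr 1
  have h2 : (1 + N / D) / (1 - N / D) = (D + N) / (D - N) := by
    field_simp
  rw [h2]
  have h3 : (D + N) / (D - N) = (D + N) ^ 2 / (D ^ 2 - N ^ 2) := by
    have : D ^ 2 - N ^ 2 = (D - N) * (D + N) := by ring
    rw [this]
    rw [div_mul_eq_div_div_swap]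
    congr 1
    rw [pow_two, mul_div_assoc, div_self (by positivity), mul_one]
  rw [h3, key_identity]

lemma sq_abs_lt_one {w : ℂ} (hw : ‖w‖ < 1) : ‖w‖ ^ 2 < 1 := by
  nlinarith [norm_nonneg w]

/-- The key difference formula. -/
lemma pd_diff_formula {z w : ℂ} (hz : ‖z‖ < 1) (hw : ‖w‖ < 1) :
    pd z w - pd 0 w = (1 / 2) * Real.log
      ((‖1 - (starRingEnd ℂ) w * z‖ + ‖z - w‖) ^ 2
        / ((1 - ‖z‖ ^ 2) * (1 + ‖w‖) ^ 2)) := by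
  set D := ‖1 - (starRingEnd ℂ) w * z‖ with hD
  set N := ‖z - w‖ with hN
  have hND : N < D := N_lt_D hz hw
  have hN0 : 0 ≤ N := norm_nonneg _
  have hD0 : 0 < D := lt_of_le_of_lt hN0 hND
  have hw0 : 0 ≤ ‖w‖ := norm_nonneg _
  have hz2 : ‖z‖ ^ 2 < 1 := sq_abs_lt_one hz
  have hw2 : ‖w‖ ^ 2 < 1 := sq_abs_lt_one hw
  have h0 : pd 0 w = (1/2) * Real.log ((1 + ‖0 - w‖) ^ 2
      / ((1 - (0:ℝ) ^ 2) * (1 - ‖w‖ ^ 2))) := by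
    have := pd_formula (z := 0) (w := w) (by simp) hw
    simpa using this
  have hz2' : (0:ℝ) < 1 - ‖z‖ ^ 2 := by linarith
  have hw2' : (0:ℝ) < 1 - ‖w‖ ^ 2 := by linarith
  have hDN : (0:ℝ) < (D + N) ^ 2 := by nlinarith
  have hX : (0:ℝ) < (D + N) ^ 2 / ((1 - ‖z‖ ^ 2) * (1 - ‖w‖ ^ 2)) :=
    div_pos hDN (mul_pos hz2' hw2')
  have hY : (0:ℝ) < (1 + ‖0 - w‖) ^ 2
      / ((1 - (0:ℝ) ^ 2) * (1 - ‖w‖ ^ 2)) := by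
    apply div_pos
    · have : ‖0 - w‖ = ‖w‖ := by simp
      nlinarith
    · nlinarith
  rw [pd_formula hz hw, h0, ← mul_sub, ← Real.log_div (ne_of_gt hX) (ne_of_gt hY)]
  congr 2
  simp only [zero_sub, norm_neg]
  rw [div_div_div_eq]
  have hp1 : (0:ℝ) < (1 + ‖w‖) ^ 2 := by nlinarith
  rw [div_eq_div_iff (by nlinarith [mul_pos (mul_pos hz2' hw2') hp1, mul_pos hz2' hp1])
    (by nlinarith [mul_pos (mul_pos hz2' hw2') hp1, mul_pos hz2' hp1])]
  ring

/-- Limit of the difference along a sequence tending to a boundary point. -/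
lemma tendsto_pd_diff {ζ : ℂ} (hζ : ‖ζ‖ = 1) {s : ℝ} (hs0 : 0 < s) (hs1 : s < 1)
    {w : ℕ → ℂ} (hw : ∀ n, ‖w n‖ < 1) (hwζ : Tendsto w atTop (nhds ζ)) :
    Tendsto (fun n => pd ((s : ℂ) * ζ) (w n) - pd 0 (w n)) atTop
      (nhds ((1 / 2) * Real.log ((1 - s) / (1 + s)))) := by
  have hzabs : ‖(s:ℂ) * ζ‖ < 1 := by
    rw [norm_mul, hζ, mul_one, Complex.norm_real, Real.norm_eq_abs, abs_of_pos hs0]; exact hs1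
  have heq : ∀ n, pd ((s : ℂ) * ζ) (w n) - pd 0 (w n) = (1 / 2) * Real.log
      ((‖1 - (starRingEnd ℂ) (w n) * ((s:ℂ) * ζ)‖ + ‖(s:ℂ) * ζ - w n‖) ^ 2
        / ((1 - ‖(s:ℂ)*ζ‖ ^ 2) * (1 + ‖w n‖) ^ 2)) := fun n =>
    pd_diff_formula hzabs (hw n)
  simp only [heq]
  -- limits of the pieces
  have hD : Tendsto (fun n => ‖1 - (starRingEnd ℂ) (w n) * ((s:ℂ) * ζ)‖)
      atTop (nhds (1 - s)) := by
    have hc : Tendsto (fun n => 1 - (starRingEnd ℂ) (w n) * ((s:ℂ) * ζ)) atTop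
        (nhds (1 - (starRingEnd ℂ) ζ * ((s:ℂ) * ζ))) := by
      exact (tendsto_const_nhds.sub (((Complex.continuous_conj.tendsto ζ).comp hwζ).mul
        tendsto_const_nhds))
    have hval : ‖1 - (starRingEnd ℂ) ζ * ((s:ℂ) * ζ)‖ = 1 - s := by
      have h1 : (starRingEnd ℂ) ζ * ((s:ℂ) * ζ) = (s:ℂ) * ((starRingEnd ℂ) ζ * ζ) := by ring
      have h2 : (starRingEnd ℂ) ζ * ζ = 1 := by
        rw [mul_comm, Complex.mul_conj]
        rw [Complex.normSq_eq_norm_sq, hζ]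
        norm_num
      rw [h1, h2, mul_one]
      rw [show (1 : ℂ) - (s:ℂ) = ((1 - s : ℝ) : ℂ) by push_cast; ring,
        Complex.norm_real, Real.norm_eq_abs, abs_of_pos (by linarith)]
    rw [← hval]
    exact (continuous_norm.tendsto _).comp hc
  have hNt : Tendsto (fun n => ‖(s:ℂ) * ζ - w n‖) atTop (nhds (1 - s)) := by
    have hc : Tendsto (fun n => (s:ℂ) * ζ - w n) atTop (nhds ((s:ℂ) * ζ - ζ)) :=
      tendsto_const_nhds.sub hwζ
    have hval : ‖(s:ℂ) * ζ - ζ‖ = 1 - s := by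
      have : (s:ℂ) * ζ - ζ = ((s:ℝ) - 1 : ℝ) * ζ := by push_cast; ring
      rw [this, norm_mul, hζ, mul_one, Complex.norm_real, Real.norm_eq_abs, abs_of_neg (by linarith)]
      ring
    rw [← hval]
    exact (continuous_norm.tendsto _).comp hc
  have hwabs : Tendsto (fun n => ‖w n‖) atTop (nhds 1) := by
    rw [← hζ]
    exact (continuous_norm.tendsto _).comp hwζ
  have harg : Tendsto (fun n =>
      ((‖1 - (starRingEnd ℂ) (w n) * ((s:ℂ) * ζ)‖ + ‖(s:ℂ) * ζ - w n‖) ^ 2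
        / ((1 - ‖(s:ℂ)*ζ‖ ^ 2) * (1 + ‖w n‖) ^ 2))) atTop
      (nhds (((1 - s) + (1 - s)) ^ 2 / ((1 - ‖(s:ℂ)*ζ‖ ^ 2) * (1 + 1) ^ 2))) := by
    apply Tendsto.div
    · exact ((hD.add hNt).pow 2)
    · exact (tendsto_const_nhds.mul ((tendsto_const_nhds.add hwabs).pow 2))
    · have h2' : ‖(s:ℂ)*ζ‖ ^ 2 < 1 := sq_abs_lt_one hzabs
      have : (0:ℝ) < (1 - ‖(s:ℂ)*ζ‖ ^ 2) * (1 + 1) ^ 2 := by nlinarith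
      exact ne_of_gt this
  have hval2 : ((1 - s) + (1 - s)) ^ 2 / ((1 - ‖(s:ℂ)*ζ‖ ^ 2) * (1 + 1) ^ 2)
      = (1 - s) / (1 + s) := by
    have h1 : ‖(s:ℂ)*ζ‖ = s := by
      rw [norm_mul, hζ, mul_one, Complex.norm_real, Real.norm_eq_abs, abs_of_pos hs0]
    rw [h1]
    rw [div_eq_div_iff (by nlinarith) (by linarith)]
    ring
  rw [hval2] at harg
  have hlogpos : (0:ℝ) < (1 - s) / (1 + s) := by
    apply div_pos <;> linarith
  exact ((Real.continuousAt_log (ne_of_gt hlogpos)).tendsto.comp harg).const_mul _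

/-- continuity of pd in second variable along a sequence, for interior points -/
lemma tendsto_pd_interior {z q : ℂ} (hz : ‖z‖ < 1) (hq : ‖q‖ < 1)
    {w : ℕ → ℂ} (hw : ∀ n, ‖w n‖ < 1) (hwq : Tendsto w atTop (nhds q)) :
    Tendsto (fun n => pd z (w n)) atTop (nhds (pd z q)) := by
  have heq : ∀ n, pd z (w n) = (1 / 2) * Real.log
      ((‖1 - (starRingEnd ℂ) (w n) * z‖ + ‖z - w n‖) ^ 2
        / ((1 - ‖z‖ ^ 2) * (1 - ‖w n‖ ^ 2))) := fun n =>
    pd_formula hz (hw n)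
  simp only [heq]
  rw [pd_formula hz hq]
  have hND := N_lt_D hz hq
  have hD0 : 0 < ‖1 - (starRingEnd ℂ) q * z‖ :=
    lt_of_le_of_lt (norm_nonneg _) hND
  have hz2 := sq_abs_lt_one hz
  have hq2 := sq_abs_lt_one hq
  apply Tendsto.const_mul
  apply (Real.continuousAt_log _).tendsto.comp
  · apply Tendsto.div
    · apply Tendsto.pow
      apply Tendsto.add
      · exact (continuous_norm.tendsto _).comp
          (tendsto_const_nhds.sub (((Complex.continuous_conj.tendsto q).comp hwq).mul
            tendsto_const_nhds))
      · exact (continuous_norm.tendsto _).comp (tendsto_const_nhds.sub hwq)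
    · apply Tendsto.mul tendsto_const_nhds
      apply Tendsto.const_sub
      exact (((continuous_norm.tendsto q).comp hwq).pow 2)
    · have hz2' : (0:ℝ) < 1 - ‖z‖ ^ 2 := by linarith
      have hq2' : (0:ℝ) < 1 - ‖q‖ ^ 2 := by linarith
      exact ne_of_gt (mul_pos hz2' hq2')
  · apply ne_of_gt
    have hz2' : (0:ℝ) < 1 - ‖z‖ ^ 2 := by linarith
    have hq2' : (0:ℝ) < 1 - ‖q‖ ^ 2 := by linarith
    have : (0:ℝ) < (‖1 - (starRingEnd ℂ) q * z‖ + ‖z - q‖) ^ 2 := by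
      nlinarith [norm_nonneg (z - q)]
    exact div_pos this (mul_pos hz2' hq2')

lemma pd_zero (w : ℂ) : pd 0 w = artanh (‖w‖) := by
  simp [pd]

lemma tendsto_pd_zero_atTop {w : ℕ → ℂ} (hw : ∀ n, ‖w n‖ < 1)
    (h1 : Tendsto (fun n => ‖w n‖) atTop (nhds 1)) :
    Tendsto (fun n => pd 0 (w n)) atTop atTop := by
  simp only [pd_zero, artanh]
  apply Tendsto.const_mul_atTop (by norm_num : (0:ℝ) < 1/2)
  apply Real.tendsto_log_atTop.comp
  have hmono : ∀ n, (1 - ‖w n‖)⁻¹ ≤ (1 + ‖w n‖) / (1 - ‖w n‖) := by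
    intro n
    have h0 : 0 ≤ ‖w n‖ := norm_nonneg _
    have h2 : 0 < 1 - ‖w n‖ := by linarith [hw n]
    rw [div_eq_mul_inv]
    nlinarith [inv_pos.2 h2]
  apply tendsto_atTop_mono hmono
  · apply tendsto_inv_nhdsGT_zero.comp
    rw [tendsto_nhdsWithin_iff]
    constructor
    · have := h1.const_sub 1
      simpa using this
    · filter_upwards with n
      exact sub_pos.2 (hw n)

lemma horo_aux {v : ℕ → ℂ × ℂ}
    (hv : ∀ n, ‖(v n).1‖ < 1 ∧ ‖(v n).2‖ < 1)
    {q : ℂ × ℂ} (hq1 : ‖q.1‖ = 1) (hq2 : ‖q.2‖ ≤ 1)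
    (hc : Tendsto v atTop (nhds q)) {R : ℝ} (hR : 0 < R) :
    ∃ z : ℂ × ℂ, (‖z.1‖ < 1 ∧ ‖z.2‖ < 1) ∧
      Filter.limsup (fun n => kd2 z (v n) - kd2 ((0:ℂ), (0:ℂ)) (v n)) Filter.atTop
        < (1 / 2) * Real.log R := by
  set s : ℝ := 1 - min R 1 / 2 with hs
  have hmin0 : 0 < min R 1 := lt_min hR one_pos
  have hmin1 : min R 1 ≤ 1 := min_le_right _ _
  have hs0 : 0 < s := by simp only [hs]; linarith
  have hs1 : s < 1 := by simp only [hs]; linarith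
  have hsR : (1 - s) / (1 + s) < R := by
    have h1 : 1 - s = min R 1 / 2 := by simp only [hs]; ring
    have h2 : (1 - s) / (1 + s) ≤ 1 - s := by
      apply div_le_self (by linarith) (by linarith)
    have h3 : min R 1 / 2 < R := by
      have := min_le_left R 1
      linarith
    linarith
  set c : ℝ := (1 / 2) * Real.log ((1 - s) / (1 + s)) with hcdef
  have hcR : c < (1 / 2) * Real.log R := by
    apply mul_lt_mul_of_pos_left _ (by norm_num : (0:ℝ) < 1/2)
    exact Real.log_lt_log (div_pos (by linarith) (by linarith)) hsR
  have hc1 : Tendsto (fun n => (v n).1) atTop (nhds q.1) :=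
    (continuous_fst.tendsto q).comp hc
  have hc2 : Tendsto (fun n => (v n).2) atTop (nhds q.2) :=
    (continuous_snd.tendsto q).comp hc
  have hv1 : ∀ n, ‖(v n).1‖ < 1 := fun n => (hv n).1
  have hv2 : ∀ n, ‖(v n).2‖ < 1 := fun n => (hv n).2
  have hA : Tendsto (fun n => pd ((s:ℂ) * q.1) ((v n).1) - pd 0 ((v n).1)) atTop (nhds c) :=
    tendsto_pd_diff hq1 hs0 hs1 hv1 hc1
  have habs1 : Tendsto (fun n => ‖(v n).1‖) atTop (nhds 1) := by
    rw [← hq1]; exact (continuous_norm.tendsto _).comp hc1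
  have ha : Tendsto (fun n => pd 0 ((v n).1)) atTop atTop := tendsto_pd_zero_atTop hv1 habs1
  have hAtop : Tendsto (fun n => pd ((s:ℂ) * q.1) ((v n).1)) atTop atTop := by
    have := hA.add_atTop ha
    simpa using this
  have hsq1 : ‖(s:ℂ) * q.1‖ < 1 := by
    rw [norm_mul, hq1, mul_one, Complex.norm_real, Real.norm_eq_abs, abs_of_pos hs0]; exact hs1
  rcases eq_or_lt_of_le hq2 with hq2e | hq2l
  · -- both coordinates on the boundary
    refine ⟨((s:ℂ) * q.1, (s:ℂ) * q.2), ⟨hsq1, ?_⟩, ?_⟩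
    · rw [norm_mul, hq2e, mul_one, Complex.norm_real, Real.norm_eq_abs, abs_of_pos hs0]
      exact hs1
    · have hB : Tendsto (fun n => pd ((s:ℂ) * q.2) ((v n).2) - pd 0 ((v n).2)) atTop (nhds c) :=
        tendsto_pd_diff hq2e hs0 hs1 hv2 hc2
      have hdiff : Tendsto (fun n => kd2 ((s:ℂ) * q.1, (s:ℂ) * q.2) (v n)
          - kd2 ((0:ℂ), (0:ℂ)) (v n)) atTop (nhds c) := by
        have hg : Tendsto (fun n => max |pd ((s:ℂ) * q.1) ((v n).1) - pd 0 ((v n).1) - c|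
            |pd ((s:ℂ) * q.2) ((v n).2) - pd 0 ((v n).2) - c|) atTop (nhds 0) := by
          have h1 : Tendsto (fun n => |pd ((s:ℂ) * q.1) ((v n).1) - pd 0 ((v n).1) - c|)
              atTop (nhds 0) := by
            have := (hA.sub_const c).abs
            simpa using this
          have h2 : Tendsto (fun n => |pd ((s:ℂ) * q.2) ((v n).2) - pd 0 ((v n).2) - c|)
              atTop (nhds 0) := by
            have := (hB.sub_const c).abs
            simpa using this
          have := h1.max h2
          simpa using this
        have hbound : ∀ n, ‖kd2 ((s:ℂ) * q.1, (s:ℂ) * q.2) (v n)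
            - kd2 ((0:ℂ), (0:ℂ)) (v n) - c‖
            ≤ max |pd ((s:ℂ) * q.1) ((v n).1) - pd 0 ((v n).1) - c|
              |pd ((s:ℂ) * q.2) ((v n).2) - pd 0 ((v n).2) - c| := by
          intro n
          have key : kd2 ((0:ℂ), (0:ℂ)) (v n) + c
              = max (pd 0 ((v n).1) + c) (pd 0 ((v n).2) + c) := by
            rw [kd2]
            exact (max_add_add_right _ _ _).symm
          have h3 : kd2 ((s:ℂ) * q.1, (s:ℂ) * q.2) (v n) - kd2 ((0:ℂ), (0:ℂ)) (v n) - c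
              = kd2 ((s:ℂ) * q.1, (s:ℂ) * q.2) (v n)
                - max (pd 0 ((v n).1) + c) (pd 0 ((v n).2) + c) := by
            rw [← key]; ring
          rw [Real.norm_eq_abs, h3, kd2]
          have := abs_max_sub_max_le_max (pd ((s:ℂ) * q.1) ((v n).1))
            (pd ((s:ℂ) * q.2) ((v n).2)) (pd 0 ((v n).1) + c) (pd 0 ((v n).2) + c)
          simpa only [sub_add_eq_sub_sub] using this
        have h0 : Tendsto (fun n => kd2 ((s:ℂ) * q.1, (s:ℂ) * q.2) (v n)
            - kd2 ((0:ℂ), (0:ℂ)) (v n) - c) atTop (nhds 0) :=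
          squeeze_zero_norm hbound hg
        have := h0.add_const c
        simpa using this
      rw [hdiff.limsup_eq]
      exact hcR
  · -- second coordinate interior
    refine ⟨((s:ℂ) * q.1, q.2), ⟨hsq1, hq2l⟩, ?_⟩
    have hB : Tendsto (fun n => pd q.2 ((v n).2)) atTop (nhds (pd q.2 q.2)) :=
      tendsto_pd_interior hq2l hq2l hv2 hc2
    have hb : Tendsto (fun n => pd 0 ((v n).2)) atTop (nhds (pd 0 q.2)) :=
      tendsto_pd_interior (by simp) hq2l hv2 hc2
    set M : ℝ := max (pd q.2 q.2) (pd 0 q.2) with hM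
    have hBev : ∀ᶠ n in atTop, pd q.2 ((v n).2) ≤ M + 1 :=
      hB.eventually_le_const (by simp only [hM]; nlinarith [le_max_left (pd q.2 q.2) (pd 0 q.2)])
    have hbev : ∀ᶠ n in atTop, pd 0 ((v n).2) ≤ M + 1 :=
      hb.eventually_le_const (by simp only [hM]; nlinarith [le_max_right (pd q.2 q.2) (pd 0 q.2)])
    have hAev : ∀ᶠ n in atTop, M + 1 ≤ pd ((s:ℂ) * q.1) ((v n).1) :=
      hAtop.eventually_ge_atTop (M + 1)
    have haev : ∀ᶠ n in atTop, M + 1 ≤ pd 0 ((v n).1) := ha.eventually_ge_atTop (M + 1)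
    have heq : (fun n => kd2 ((s:ℂ) * q.1, q.2) (v n) - kd2 ((0:ℂ), (0:ℂ)) (v n))
        =ᶠ[atTop] (fun n => pd ((s:ℂ) * q.1) ((v n).1) - pd 0 ((v n).1)) := by
      filter_upwards [hBev, hbev, hAev, haev] with n h1 h2 h3 h4
      have e1 : kd2 ((s:ℂ) * q.1, q.2) (v n) = pd ((s:ℂ) * q.1) ((v n).1) := by
        rw [kd2]; exact max_eq_left (by linarith)
      have e2 : kd2 ((0:ℂ), (0:ℂ)) (v n) = pd 0 ((v n).1) := by
        rw [kd2]; exact max_eq_left (by linarith)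
      rw [e1, e2]
    have hdiff : Tendsto (fun n => kd2 ((s:ℂ) * q.1, q.2) (v n)
        - kd2 ((0:ℂ), (0:ℂ)) (v n)) atTop (nhds c) := Tendsto.congr' heq.symm hA
    rw [hdiff.limsup_eq]
    exact hcR

theorem bidisc_boundary_sequence_admissible (u : ℕ → ℂ × ℂ) (hu : ∀ n, u n ∈ bidisc)
    (p : ℂ × ℂ) (hp : p ∈ frontier bidisc)
    (hconv : Filter.Tendsto u Filter.atTop (nhds p)) :
    Filter.Tendsto (fun n => kd2 ((0 : ℂ), (0 : ℂ)) (u n)) Filter.atTop Filter.atTop ∧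
      ∀ R > (0 : ℝ), (biE ((0 : ℂ), (0 : ℂ)) u R).Nonempty := by
  have hu1 : ∀ n, ‖(u n).1‖ < 1 := fun n => (hu n).1
  have hu2 : ∀ n, ‖(u n).2‖ < 1 := fun n => (hu n).2
  have hc1 : Tendsto (fun n => (u n).1) atTop (nhds p.1) := (continuous_fst.tendsto p).comp hconv
  have hc2 : Tendsto (fun n => (u n).2) atTop (nhds p.2) := (continuous_snd.tendsto p).comp hconv
  have habs1 : Tendsto (fun n => ‖(u n).1‖) atTop (nhds (‖p.1‖)) :=
    (continuous_norm.tendsto _).comp hc1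
  have habs2 : Tendsto (fun n => ‖(u n).2‖) atTop (nhds (‖p.2‖)) :=
    (continuous_norm.tendsto _).comp hc2
  have hp1le : ‖p.1‖ ≤ 1 := le_of_tendsto' habs1 (fun n => le_of_lt (hu1 n))
  have hp2le : ‖p.2‖ ≤ 1 := le_of_tendsto' habs2 (fun n => le_of_lt (hu2 n))
  have hopen : IsOpen bidisc := by
    have heq : bidisc = (fun z : ℂ × ℂ => ‖z.1‖) ⁻¹' Set.Iio 1 ∩
        (fun z : ℂ × ℂ => ‖z.2‖) ⁻¹' Set.Iio 1 := rfl
    rw [heq]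
    exact (isOpen_Iio.preimage (continuous_norm.comp continuous_fst)).inter
      (isOpen_Iio.preimage (continuous_norm.comp continuous_snd))
  have hpnot : p ∉ bidisc := by
    intro hmem
    rw [hopen.frontier_eq] at hp
    exact hp.2 hmem
  have hbd : ‖p.1‖ = 1 ∨ ‖p.2‖ = 1 := by
    by_contra hcon
    push_neg at hcon
    exact hpnot ⟨lt_of_le_of_ne hp1le hcon.1, lt_of_le_of_ne hp2le hcon.2⟩
  constructor
  · -- first part : distance to base point tends to infinity
    rcases hbd with h1 | h2
    · have := tendsto_pd_zero_atTop hu1 (h1 ▸ habs1)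
      apply tendsto_atTop_mono _ this
      intro n
      exact le_max_left _ _
    · have := tendsto_pd_zero_atTop hu2 (h2 ▸ habs2)
      apply tendsto_atTop_mono _ this
      intro n
      exact le_max_right _ _
  · -- second part : horospheres are nonempty
    intro R hR
    rcases hbd with h1 | h2
    · obtain ⟨z, hz, hlim⟩ := horo_aux hu h1 hp2le hconv hR
      exact ⟨z, hz, hlim⟩
    · have hvswap : ∀ n, ‖((u n).swap).1‖ < 1 ∧ ‖((u n).swap).2‖ < 1 :=
        fun n => ⟨hu2 n, hu1 n⟩
      have hcswap : Tendsto (fun n => (u n).swap) atTop (nhds p.swap) :=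
        (continuous_swap.tendsto p).comp hconv
      obtain ⟨z, hz, hlim⟩ := horo_aux hvswap (q := p.swap) h2 hp1le hcswap hR
      refine ⟨z.swap, ⟨hz.2, hz.1⟩, ?_⟩
      have hfun : (fun n => kd2 z.swap (u n) - kd2 ((0:ℂ), (0:ℂ)) (u n))
          = (fun n => kd2 z ((u n).swap) - kd2 ((0:ℂ), (0:ℂ)) ((u n).swap)) := by
        funext n
        simp only [kd2, Prod.fst_swap, Prod.snd_swap]
        rw [max_comm (pd z.2 (u n).1), max_comm (pd 0 (u n).1)]
      rw [hfun]
      exact hlim
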